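/- (Lemma 1.) Let d ≥ 2, let a ≥ 0 be a real number, and let c_{nm} ∈ ℂ for (n,m) ∈ {0,…,d−1}² with (n,m) ≠ (0,0) satisfy |c_{nm}| ≤ 1 for all such (n,m). Define the d²×d² matrix C := a·((d−1)·1_{d²} + Σ_{(n,m)≠(0,0)} c_{nm} · (U_{nm} ⊗ U_{(−n) mod d, m})), where ⊗ is the Kronecker product. Then every separable density matrix ρ on ℂ^d ⊗ ℂ^d satisfies Re Tr(ρ·C) ≥ 0. -/

import Mathlib

open Matrix Complex
open scoped Matrix Kronecker ComplexOrder

noncomputable section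

/-- A density matrix: Hermitian, positive semidefinite, trace 1. -/
def IsDensityMatrix {n : Type*} [Fintype n] [DecidableEq n] (ρ : Matrix n n ℂ) : Prop :=
  ρ.IsHermitian ∧ ρ.PosSemidef ∧ ρ.trace = 1

/-- A separable state on ℂ^d ⊗ ℂ^d : a finite convex combination of Kronecker
products of density matrices. -/
def IsSepState {d : ℕ} (ρ : Matrix (Fin d × Fin d) (Fin d × Fin d) ℂ) : Prop :=
  ∃ (K : ℕ) (p : Fin K → ℝ) (ρ₁ ρ₂ : Fin K → Matrix (Fin d) (Fin d) ℂ),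
    (∀ k, 0 ≤ p k) ∧ (∑ k, p k = 1) ∧
    (∀ k, IsDensityMatrix (ρ₁ k)) ∧ (∀ k, IsDensityMatrix (ρ₂ k)) ∧
    ρ = ∑ k, (p k : ℂ) • (ρ₁ k ⊗ₖ ρ₂ k)

/-- Hilbert–Schmidt inner product ⟨A,B⟩ = Tr(A†B). -/
def hsInner {n : Type*} [Fintype n] (A B : Matrix n n ℂ) : ℂ := (Aᴴ * B).trace

/-- Hilbert–Schmidt (Frobenius) norm ‖A‖ = √Tr(A†A). -/
def hsNorm {n : Type*} [Fintype n] (A : Matrix n n ℂ) : ℝ :=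
  Real.sqrt ((Aᴴ * A).trace.re)

/-- The Weyl operator U_{nm} on ℂ^d: (U_{nm})_{k,l} = exp(2πi k n / d) if l = (k+m) mod d. -/
def weyl (d : ℕ) (n m : Fin d) : Matrix (Fin d) (Fin d) ℂ :=
  Matrix.of fun k l =>
    if l = k + m then Complex.exp (2 * Real.pi * Complex.I * k.val * n.val / d) else 0

/-- The maximally entangled two-qutrit vector |φ⁺₃⟩. -/
def phiPlus3 : (Fin 3 × Fin 3) → ℂ :=
  fun p => if p.1 = p.2 then ((1 / Real.sqrt 3 : ℝ) : ℂ) else 0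

/-- The projector |φ⁺₃⟩⟨φ⁺₃|. -/
def projPhiPlus3 : Matrix (Fin 3 × Fin 3) (Fin 3 × Fin 3) ℂ :=
  vecMulVec phiPlus3 (star phiPlus3)

/-- The two-qutrit Bell projectors P_{nm}. -/
def bellP (n m : Fin 3) : Matrix (Fin 3 × Fin 3) (Fin 3 × Fin 3) ℂ :=
  (weyl 3 n m ⊗ₖ (1 : Matrix (Fin 3) (Fin 3) ℂ)) * projPhiPlus3 *
    (weyl 3 n m ⊗ₖ (1 : Matrix (Fin 3) (Fin 3) ℂ))ᴴ

/-- The three-parameter family of two-qutrit states ρ_{α,β,γ}. -/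
def rhoFam (α β γ : ℝ) : Matrix (Fin 3 × Fin 3) (Fin 3 × Fin 3) ℂ :=
  (((1 - α - β - γ) / 9 : ℝ) : ℂ) • (1 : Matrix (Fin 3 × Fin 3) (Fin 3 × Fin 3) ℂ) +
    (α : ℂ) • bellP 0 0 + ((β / 2 : ℝ) : ℂ) • (bellP 1 0 + bellP 2 0) +
    ((γ / 3 : ℝ) : ℂ) • (bellP 0 1 + bellP 1 1 + bellP 2 1)

/-- The operator U₁. -/
def opU1 : Matrix (Fin 3 × Fin 3) (Fin 3 × Fin 3) ℂ :=
  weyl 3 0 1 ⊗ₖ weyl 3 0 1 + weyl 3 0 2 ⊗ₖ weyl 3 0 2 + weyl 3 1 1 ⊗ₖ weyl 3 2 1 +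
    weyl 3 1 2 ⊗ₖ weyl 3 2 2 + weyl 3 2 1 ⊗ₖ weyl 3 1 1 + weyl 3 2 2 ⊗ₖ weyl 3 1 2

/-- The operator U₂ᴵ. -/
def opU2I : Matrix (Fin 3 × Fin 3) (Fin 3 × Fin 3) ℂ := weyl 3 1 0 ⊗ₖ weyl 3 2 0

/-- The operator U₂ᴵᴵ. -/
def opU2II : Matrix (Fin 3 × Fin 3) (Fin 3 × Fin 3) ℂ := weyl 3 2 0 ⊗ₖ weyl 3 1 0

/-- The operator U₂ = U₂ᴵ + U₂ᴵᴵ. -/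
def opU2 : Matrix (Fin 3 × Fin 3) (Fin 3 × Fin 3) ℂ := opU2I + opU2II

/-- σ₊ = (1/3)(|01⟩⟨01| + |12⟩⟨12| + |20⟩⟨20|). -/
def sigmaPlus : Matrix (Fin 3 × Fin 3) (Fin 3 × Fin 3) ℂ :=
  (1 / 3 : ℂ) • Matrix.diagonal (fun p => if p.2 = p.1 + 1 then 1 else 0)

/-- σ₋ = (1/3)(|10⟩⟨10| + |21⟩⟨21| + |02⟩⟨02|). -/
def sigmaMinus : Matrix (Fin 3 × Fin 3) (Fin 3 × Fin 3) ℂ :=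
  (1 / 3 : ℂ) • Matrix.diagonal (fun p => if p.1 = p.2 + 1 then 1 else 0)

/-- The Horodecki states ρ_b. -/
def horodecki (b : ℝ) : Matrix (Fin 3 × Fin 3) (Fin 3 × Fin 3) ℂ :=
  (2 / 7 : ℂ) • projPhiPlus3 + ((b / 7 : ℝ) : ℂ) • sigmaPlus +
    (((5 - b) / 7 : ℝ) : ℂ) • sigmaMinus

/-- Partial transpose in the second subsystem. -/
def ptB (ρ : Matrix (Fin 3 × Fin 3) (Fin 3 × Fin 3) ℂ) :
    Matrix (Fin 3 × Fin 3) (Fin 3 × Fin 3) ℂ :=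
  Matrix.of fun p q => ρ (p.1, q.2) (q.1, p.2)


section AuxLemma1

variable {d : ℕ} [NeZero d]

private lemma weyl_zero_zero' : weyl d 0 0 = 1 := by
  ext k l
  simp [weyl, Matrix.one_apply, eq_comm]

private lemma trace_mul_weyl' (ρ : Matrix (Fin d) (Fin d) ℂ) (n m : Fin d) :
    (ρ * weyl d n m).trace
      = ∑ k : Fin d, ρ (k + m) k *
        Complex.exp (2 * Real.pi * Complex.I * k.val * n.val / d) := by
  simp only [Matrix.trace, Matrix.diag_apply, Matrix.mul_apply, weyl, Matrix.of_apply,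
    mul_ite, mul_zero]
  rw [Finset.sum_comm]
  refine Finset.sum_congr rfl fun k _ => ?_
  simp

private lemma char_term' (k k' n : Fin d) :
    Complex.exp (2 * Real.pi * Complex.I * k.val * n.val / d) *
      (starRingEnd ℂ) (Complex.exp (2 * Real.pi * Complex.I * k'.val * n.val / d))
    = (Complex.exp (2 * Real.pi * Complex.I * ((k.val : ℂ) - k'.val) / d)) ^ (n.val : ℕ) := by
  rw [← Complex.exp_conj, ← Complex.exp_add, ← Complex.exp_nat_mul]
  congr 1
  have h1 : (starRingEnd ℂ) (2 * Real.pi * Complex.I * k'.val * n.val / d)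
      = - (2 * Real.pi * Complex.I * k'.val * n.val / d) := by
    simp [map_div₀, Complex.conj_I, map_ofNat]
    ring
  rw [h1]
  have hd : (d : ℂ) ≠ 0 := Nat.cast_ne_zero.mpr (NeZero.ne d)
  field_simp
  ring

private lemma char_sum' (k k' : Fin d) :
    ∑ n : Fin d, Complex.exp (2 * Real.pi * Complex.I * k.val * n.val / d) *
      (starRingEnd ℂ) (Complex.exp (2 * Real.pi * Complex.I * k'.val * n.val / d))
    = if k = k' then (d : ℂ) else 0 := by
  simp only [char_term']
  set z : ℂ := Complex.exp (2 * Real.pi * Complex.I * ((k.val : ℂ) - k'.val) / d) with hz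
  rw [Fin.sum_univ_eq_sum_range (fun i => z ^ i)]
  by_cases h : k = k'
  · subst h
    simp [hz]
  · rw [if_neg h]
    have hd : (d : ℂ) ≠ 0 := Nat.cast_ne_zero.mpr (NeZero.ne d)
    have hz1 : z ≠ 1 := by
      intro hone
      rw [hz, Complex.exp_eq_one_iff] at hone
      obtain ⟨j, hj⟩ := hone
      have h2 : (2 * (Real.pi : ℂ) * Complex.I) ≠ 0 := by
        simp [Real.pi_ne_zero, Complex.I_ne_zero]
      have key : ((k.val : ℂ) - k'.val) = j * d := by
        have hj' : 2 * (Real.pi:ℂ) * Complex.I * ((k.val:ℂ) - k'.val)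
            = 2 * (Real.pi:ℂ) * Complex.I * (j * d) := by
          field_simp at hj
          linear_combination (2 * (Real.pi:ℂ) * Complex.I) * hj
        exact mul_left_cancel₀ h2 hj'
      have keyz : (k.val : ℤ) - k'.val = j * d := by exact_mod_cast key
      have hk : (k.val : ℤ) < d := by exact_mod_cast k.isLt
      have hk' : (k'.val : ℤ) < d := by exact_mod_cast k'.isLt
      have hk0 : (0:ℤ) ≤ (k.val : ℤ) := by positivity
      have hk'0 : (0:ℤ) ≤ (k'.val : ℤ) := by positivity
      have hne : (k.val : ℤ) ≠ (k'.val : ℤ) := by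
        exact_mod_cast fun hh => h (Fin.ext hh)
      have hdpos : (0:ℤ) < d := by exact_mod_cast Nat.pos_of_ne_zero (NeZero.ne d)
      rcases lt_trichotomy j 0 with hj0 | hj0 | hj0
      · nlinarith
      · simp [hj0] at keyz; omega
      · nlinarith
    have hzd : z ^ d = 1 := by
      rw [hz, ← Complex.exp_nat_mul]
      have heq : (d : ℂ) * (2 * Real.pi * Complex.I * ((k.val : ℂ) - k'.val) / d)
          = ((k.val : ℤ) - k'.val : ℤ) * (2 * Real.pi * Complex.I) := by
        push_cast
        field_simp
      rw [heq]
      exact Complex.exp_int_mul_two_pi_mul_I _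
    rw [geom_sum_eq hz1, hzd]
    simp

private lemma parseval_c' (ρ : Matrix (Fin d) (Fin d) ℂ) :
    ∑ nm : Fin d × Fin d, (ρ * weyl d nm.1 nm.2).trace *
        (starRingEnd ℂ) ((ρ * weyl d nm.1 nm.2).trace)
    = d * ∑ j : Fin d, ∑ l : Fin d, ρ j l * (starRingEnd ℂ) (ρ j l) := by
  rw [Fintype.sum_prod_type]
  rw [Finset.sum_comm]
  have step1 : ∀ m : Fin d, ∑ n : Fin d, (ρ * weyl d n m).trace *
      (starRingEnd ℂ) ((ρ * weyl d n m).trace)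
      = (d : ℂ) * ∑ k : Fin d, ρ (k + m) k * (starRingEnd ℂ) (ρ (k + m) k) := by
    intro m
    have expand : ∀ n : Fin d, (ρ * weyl d n m).trace *
        (starRingEnd ℂ) ((ρ * weyl d n m).trace)
        = ∑ k : Fin d, ∑ k' : Fin d, (ρ (k + m) k * (starRingEnd ℂ) (ρ (k' + m) k')) *
            (Complex.exp (2 * Real.pi * Complex.I * k.val * n.val / d) *
             (starRingEnd ℂ) (Complex.exp (2 * Real.pi * Complex.I * k'.val * n.val / d))) := by
      intro n
      rw [trace_mul_weyl', map_sum, Finset.sum_mul_sum]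
      refine Finset.sum_congr rfl fun k _ => Finset.sum_congr rfl fun k' _ => ?_
      simp only [_root_.map_mul]
      ring
    calc ∑ n : Fin d, (ρ * weyl d n m).trace * (starRingEnd ℂ) ((ρ * weyl d n m).trace)
        = ∑ n : Fin d, ∑ k : Fin d, ∑ k' : Fin d,
            (ρ (k + m) k * (starRingEnd ℂ) (ρ (k' + m) k')) *
            (Complex.exp (2 * Real.pi * Complex.I * k.val * n.val / d) *
             (starRingEnd ℂ) (Complex.exp (2 * Real.pi * Complex.I * k'.val * n.val / d))) := by
          exact Finset.sum_congr rfl fun n _ => expand n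
      _ = ∑ k : Fin d, ∑ k' : Fin d, (ρ (k + m) k * (starRingEnd ℂ) (ρ (k' + m) k')) *
            ∑ n : Fin d, (Complex.exp (2 * Real.pi * Complex.I * k.val * n.val / d) *
             (starRingEnd ℂ) (Complex.exp (2 * Real.pi * Complex.I * k'.val * n.val / d))) := by
          rw [Finset.sum_comm]
          refine Finset.sum_congr rfl fun k _ => ?_
          rw [Finset.sum_comm]
          refine Finset.sum_congr rfl fun k' _ => ?_
          rw [Finset.mul_sum]
      _ = ∑ k : Fin d, ∑ k' : Fin d, (ρ (k + m) k * (starRingEnd ℂ) (ρ (k' + m) k')) *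
            (if k = k' then (d:ℂ) else 0) := by
          simp only [char_sum']
      _ = (d : ℂ) * ∑ k : Fin d, ρ (k + m) k * (starRingEnd ℂ) (ρ (k + m) k) := by
          rw [Finset.mul_sum]
          refine Finset.sum_congr rfl fun k _ => ?_
          simp [Finset.sum_ite_eq, mul_comm]
  calc ∑ m : Fin d, ∑ n : Fin d, (ρ * weyl d n m).trace *
        (starRingEnd ℂ) ((ρ * weyl d n m).trace)
      = ∑ m : Fin d, (d : ℂ) * ∑ k : Fin d, ρ (k + m) k * (starRingEnd ℂ) (ρ (k + m) k) := by
        exact Finset.sum_congr rfl fun m _ => step1 m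
    _ = (d:ℂ) * ∑ k : Fin d, ∑ m : Fin d, ρ (k + m) k * (starRingEnd ℂ) (ρ (k + m) k) := by
        rw [← Finset.mul_sum, Finset.sum_comm]
    _ = (d:ℂ) * ∑ k : Fin d, ∑ j : Fin d, ρ j k * (starRingEnd ℂ) (ρ j k) := by
        congr 1
        refine Finset.sum_congr rfl fun k _ => ?_
        exact Fintype.sum_equiv (Equiv.addLeft k) _ _ (fun m => by simp [add_comm])
    _ = d * ∑ j : Fin d, ∑ l : Fin d, ρ j l * (starRingEnd ℂ) (ρ j l) := by
        rw [Finset.sum_comm]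

private lemma trace_sq_eq' {ρ : Matrix (Fin d) (Fin d) ℂ} (h : ρ.IsHermitian) :
    (ρ * ρ).trace = ∑ i : Fin d, ((h.eigenvalues i : ℂ)) ^ 2 := by
  set U : Matrix (Fin d) (Fin d) ℂ := (h.eigenvectorUnitary : Matrix (Fin d) (Fin d) ℂ)
  set D : Matrix (Fin d) (Fin d) ℂ := Matrix.diagonal (RCLike.ofReal ∘ h.eigenvalues)
  have hspec : ρ = U * D * star U := h.spectral_theorem
  have hU : star U * U = 1 := (Matrix.mem_unitaryGroup_iff').mp h.eigenvectorUnitary.2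
  have hmm : ρ * ρ = U * (D * D) * star U := by
    rw [hspec]
    calc (U * D * star U) * (U * D * star U)
        = U * D * ((star U * U) * (D * star U)) := by
          simp only [Matrix.mul_assoc]
      _ = U * (D * D) * star U := by rw [hU, Matrix.one_mul]; simp only [Matrix.mul_assoc]
  conv_lhs => rw [hmm]
  rw [Matrix.trace_mul_cycle, ← Matrix.mul_assoc, hU, Matrix.one_mul]
  rw [Matrix.diagonal_mul_diagonal, Matrix.trace_diagonal]
  simp [sq]

private lemma trace_eq' {ρ : Matrix (Fin d) (Fin d) ℂ} (h : ρ.IsHermitian) :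
    ρ.trace = ∑ i : Fin d, ((h.eigenvalues i : ℂ)) := by
  set U : Matrix (Fin d) (Fin d) ℂ := (h.eigenvectorUnitary : Matrix (Fin d) (Fin d) ℂ)
  set D : Matrix (Fin d) (Fin d) ℂ := Matrix.diagonal (RCLike.ofReal ∘ h.eigenvalues)
  have hspec : ρ = U * D * star U := h.spectral_theorem
  have hU : star U * U = 1 := (Matrix.mem_unitaryGroup_iff').mp h.eigenvectorUnitary.2
  conv_lhs => rw [hspec]
  rw [Matrix.trace_mul_cycle, hU, Matrix.one_mul, Matrix.trace_diagonal]
  simp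

private lemma purity_le_one' {ρ : Matrix (Fin d) (Fin d) ℂ} (hρ : IsDensityMatrix ρ) :
    ∑ j : Fin d, ∑ l : Fin d, Complex.normSq (ρ j l) ≤ 1 := by
  obtain ⟨h, hpsd, htr⟩ := hρ
  have key : ∑ j : Fin d, ∑ l : Fin d, (Complex.normSq (ρ j l) : ℂ) = (ρ * ρ).trace := by
    rw [Matrix.trace]
    rw [Finset.sum_comm]
    refine Finset.sum_congr rfl fun l _ => ?_
    rw [Matrix.diag_apply, Matrix.mul_apply]
    refine Finset.sum_congr rfl fun j _ => ?_
    have hsw : ρ j l = star (ρ l j) := by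
      conv_lhs => rw [← h]
      rw [Matrix.conjTranspose_apply]
    rw [Complex.normSq_eq_conj_mul_self]
    rw [hsw]
    simp [mul_comm]
  have heig : ∑ i : Fin d, h.eigenvalues i = 1 := by
    have h0 := trace_eq' h
    rw [htr] at h0
    have h1 : ((1:ℝ) : ℂ) = ((∑ i : Fin d, h.eigenvalues i : ℝ) : ℂ) := by
      push_cast
      simpa using h0
    exact_mod_cast h1.symm
  have hnn : ∀ i, 0 ≤ h.eigenvalues i := hpsd.eigenvalues_nonneg
  have hsq : ∑ j : Fin d, ∑ l : Fin d, Complex.normSq (ρ j l)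
      = ∑ i : Fin d, (h.eigenvalues i) ^ 2 := by
    have h0 := key.trans (trace_sq_eq' h)
    have h2 : ((∑ j : Fin d, ∑ l : Fin d, Complex.normSq (ρ j l) : ℝ) : ℂ)
        = ((∑ i : Fin d, (h.eigenvalues i) ^ 2 : ℝ) : ℂ) := by
      push_cast
      simpa using h0
    exact_mod_cast h2
  rw [hsq, ← heig]
  have hle1 : ∀ i : Fin d, h.eigenvalues i ≤ 1 := by
    intro i
    rw [← heig]
    exact Finset.single_le_sum (fun j _ => hnn j) (Finset.mem_univ i)
  refine Finset.sum_le_sum fun i _ => ?_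
  nlinarith [hnn i, hle1 i]

private lemma split_sum' (f : Fin d × Fin d → ℝ) :
    f ((0 : Fin d), (0 : Fin d)) +
      ∑ nm ∈ Finset.univ.filter (fun nm : Fin d × Fin d => nm ≠ (0, 0)), f nm
    = ∑ nm : Fin d × Fin d, f nm := by
  rw [Finset.filter_ne']
  exact Finset.add_sum_erase Finset.univ f (Finset.mem_univ _)

/-- Parseval over the nonzero Weyl indices. -/
private lemma sum_filter_normSq_le {ρ : Matrix (Fin d) (Fin d) ℂ} (hρ : IsDensityMatrix ρ) :
    ∑ nm ∈ Finset.univ.filter (fun nm : Fin d × Fin d => nm ≠ (0, 0)),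
      Complex.normSq ((ρ * weyl d nm.1 nm.2).trace) ≤ (d : ℝ) - 1 := by
  have hP := parseval_c' ρ
  simp only [Complex.mul_conj] at hP
  have hPr : ∑ nm : Fin d × Fin d, Complex.normSq ((ρ * weyl d nm.1 nm.2).trace)
      = d * ∑ j : Fin d, ∑ l : Fin d, Complex.normSq (ρ j l) := by
    have h' := congrArg Complex.re hP
    simpa [Complex.re_sum, Complex.re_ofReal_mul] using h'
  have htot : ∑ nm : Fin d × Fin d, Complex.normSq ((ρ * weyl d nm.1 nm.2).trace) ≤ (d : ℝ) := by
    rw [hPr]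
    calc (d:ℝ) * ∑ j : Fin d, ∑ l : Fin d, Complex.normSq (ρ j l)
        ≤ (d:ℝ) * 1 := by
          refine mul_le_mul_of_nonneg_left (purity_le_one' hρ) ?_
          positivity
      _ = d := mul_one _
  have h00 : Complex.normSq ((ρ * weyl d (0:Fin d) (0:Fin d)).trace) = 1 := by
    rw [weyl_zero_zero', Matrix.mul_one, hρ.2.2]
    simp
  have hsplit : Complex.normSq ((ρ * weyl d (0:Fin d) (0:Fin d)).trace) +
      ∑ nm ∈ Finset.univ.filter (fun nm : Fin d × Fin d => nm ≠ (0, 0)),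
        Complex.normSq ((ρ * weyl d nm.1 nm.2).trace)
      = ∑ nm : Fin d × Fin d, Complex.normSq ((ρ * weyl d nm.1 nm.2).trace) :=
    split_sum' (fun nm : Fin d × Fin d => Complex.normSq ((ρ * weyl d nm.1 nm.2).trace))
  rw [h00] at hsplit
  linarith

/-- Cauchy–Schwarz bound for the cross term. -/
private lemma cross_term_le {ρ₁ ρ₂ : Matrix (Fin d) (Fin d) ℂ}
    (h1 : IsDensityMatrix ρ₁) (h2 : IsDensityMatrix ρ₂) :
    ∑ nm ∈ Finset.univ.filter (fun nm : Fin d × Fin d => nm ≠ (0, 0)),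
      ‖(ρ₁ * weyl d nm.1 nm.2).trace‖ *
        ‖(ρ₂ * weyl d (-nm.1) nm.2).trace‖ ≤ (d : ℝ) - 1 := by
  have hd1 : (0:ℝ) ≤ (d : ℝ) - 1 := by
    have : 1 ≤ d := Nat.one_le_iff_ne_zero.mpr (NeZero.ne d)
    have : (1:ℝ) ≤ d := by exact_mod_cast this
    linarith
  have hb1 := sum_filter_normSq_le h1
  have hb2' := sum_filter_normSq_le h2
  have hb2 : ∑ nm ∈ Finset.univ.filter (fun nm : Fin d × Fin d => nm ≠ (0, 0)),
      Complex.normSq ((ρ₂ * weyl d (-nm.1) nm.2).trace) ≤ (d : ℝ) - 1 := by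
    have hre : ∑ nm ∈ Finset.univ.filter (fun nm : Fin d × Fin d => nm ≠ (0, 0)),
        Complex.normSq ((ρ₂ * weyl d (-nm.1) nm.2).trace)
        = ∑ nm ∈ Finset.univ.filter (fun nm : Fin d × Fin d => nm ≠ (0, 0)),
        Complex.normSq ((ρ₂ * weyl d nm.1 nm.2).trace) := by
      refine Finset.sum_equiv ((Equiv.neg (Fin d)).prodCongr (Equiv.refl (Fin d))) ?_ ?_
      · intro nm
        simp only [Finset.mem_filter, Finset.mem_univ, true_and, Equiv.prodCongr_apply,
          Equiv.coe_refl, Prod.map, Equiv.neg_apply, id]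
        constructor
        · intro hne hc
          apply hne
          rw [Prod.ext_iff] at hc ⊢
          obtain ⟨hc1, hc2⟩ := hc
          exact ⟨by simpa using congrArg Neg.neg hc1, hc2⟩
        · intro hne hc
          apply hne
          rw [Prod.ext_iff] at hc ⊢
          obtain ⟨hc1, hc2⟩ := hc
          exact ⟨by simp [hc1], hc2⟩
      · intro nm _
        simp
    rw [hre]
    exact hb2'
  calc ∑ nm ∈ Finset.univ.filter (fun nm : Fin d × Fin d => nm ≠ (0, 0)),
        ‖(ρ₁ * weyl d nm.1 nm.2).trace‖ *
          ‖(ρ₂ * weyl d (-nm.1) nm.2).trace‖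
      ≤ Real.sqrt (∑ nm ∈ Finset.univ.filter (fun nm : Fin d × Fin d => nm ≠ (0, 0)),
          ‖(ρ₁ * weyl d nm.1 nm.2).trace‖ ^ 2) *
        Real.sqrt (∑ nm ∈ Finset.univ.filter (fun nm : Fin d × Fin d => nm ≠ (0, 0)),
          ‖(ρ₂ * weyl d (-nm.1) nm.2).trace‖ ^ 2) :=
        Real.sum_mul_le_sqrt_mul_sqrt _ _ _
    _ ≤ Real.sqrt ((d:ℝ) - 1) * Real.sqrt ((d:ℝ) - 1) := by
        refine mul_le_mul ?_ ?_ (Real.sqrt_nonneg _) (Real.sqrt_nonneg _)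
        · refine Real.sqrt_le_sqrt ?_
          simpa only [Complex.sq_norm] using hb1
        · refine Real.sqrt_le_sqrt ?_
          simpa only [Complex.sq_norm] using hb2
    _ = (d:ℝ) - 1 := Real.mul_self_sqrt hd1

end AuxLemma1

/-- Lemma 1: operators of the Weyl form with small coefficients have nonnegative
expectation value on all separable states. -/
theorem stmt3 (d : ℕ) [NeZero d] (hd : 2 ≤ d) (a : ℝ) (ha : 0 ≤ a)
    (c : Fin d × Fin d → ℂ)
    (hc : ∀ nm : Fin d × Fin d, nm ≠ (0, 0) → ‖c nm‖ ≤ 1)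
    (C : Matrix (Fin d × Fin d) (Fin d × Fin d) ℂ)
    (hC : C = (a : ℂ) • (((d : ℂ) - 1) • (1 : Matrix (Fin d × Fin d) (Fin d × Fin d) ℂ) +
      ∑ nm ∈ Finset.univ.filter (fun nm : Fin d × Fin d => nm ≠ (0, 0)),
        c nm • (weyl d nm.1 nm.2 ⊗ₖ weyl d (-nm.1) nm.2))) :
    ∀ ρ : Matrix (Fin d × Fin d) (Fin d × Fin d) ℂ, IsSepState ρ →
      0 ≤ ((ρ * C).trace).re := by
  have hd1 : (0:ℝ) ≤ (d : ℝ) - 1 := by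
    have : (2:ℝ) ≤ d := by exact_mod_cast hd
    linarith
  -- bound for a single product state
  have key : ∀ σ₁ σ₂ : Matrix (Fin d) (Fin d) ℂ, IsDensityMatrix σ₁ → IsDensityMatrix σ₂ →
      0 ≤ (((σ₁ ⊗ₖ σ₂) * C).trace).re := by
    intro σ₁ σ₂ h1 h2
    have htr : ((σ₁ ⊗ₖ σ₂) * C).trace
        = (a : ℂ) * (((d : ℂ) - 1) +
          ∑ nm ∈ Finset.univ.filter (fun nm : Fin d × Fin d => nm ≠ (0, 0)),
            c nm * ((σ₁ * weyl d nm.1 nm.2).trace * (σ₂ * weyl d (-nm.1) nm.2).trace)) := by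
      rw [hC, Matrix.mul_smul, Matrix.trace_smul, smul_eq_mul]
      congr 1
      rw [Matrix.mul_add, Matrix.trace_add]
      congr 1
      · rw [Matrix.mul_smul, Matrix.mul_one, Matrix.trace_smul, smul_eq_mul,
          Matrix.trace_kronecker, h1.2.2, h2.2.2]
        ring
      · rw [Finset.mul_sum, Matrix.trace_sum]
        refine Finset.sum_congr rfl fun nm _ => ?_
        rw [Matrix.mul_smul, Matrix.trace_smul, smul_eq_mul, ← Matrix.mul_kronecker_mul,
          Matrix.trace_kronecker]
    rw [htr, Complex.re_ofReal_mul]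
    refine mul_nonneg ha ?_
    set S : ℂ := ∑ nm ∈ Finset.univ.filter (fun nm : Fin d × Fin d => nm ≠ (0, 0)),
        c nm * ((σ₁ * weyl d nm.1 nm.2).trace * (σ₂ * weyl d (-nm.1) nm.2).trace) with hS
    have habs : ‖S‖ ≤ (d : ℝ) - 1 := by
      calc ‖S‖
          ≤ ∑ nm ∈ Finset.univ.filter (fun nm : Fin d × Fin d => nm ≠ (0, 0)),
            ‖c nm * ((σ₁ * weyl d nm.1 nm.2).trace *
              (σ₂ * weyl d (-nm.1) nm.2).trace)‖ := by
            rw [hS]; exact norm_sum_le _ _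
        _ ≤ ∑ nm ∈ Finset.univ.filter (fun nm : Fin d × Fin d => nm ≠ (0, 0)),
            ‖(σ₁ * weyl d nm.1 nm.2).trace‖ *
              ‖(σ₂ * weyl d (-nm.1) nm.2).trace‖ := by
            refine Finset.sum_le_sum fun nm hnm => ?_
            rw [norm_mul, norm_mul]
            have hcle : ‖c nm‖ ≤ 1 := by
              refine hc nm ?_
              simpa using (Finset.mem_filter.mp hnm).2
            calc ‖c nm‖ * (‖(σ₁ * weyl d nm.1 nm.2).trace‖ *
                  ‖(σ₂ * weyl d (-nm.1) nm.2).trace‖)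
                ≤ 1 * (‖(σ₁ * weyl d nm.1 nm.2).trace‖ *
                  ‖(σ₂ * weyl d (-nm.1) nm.2).trace‖) := by
                  refine mul_le_mul_of_nonneg_right hcle (by positivity)
              _ = _ := one_mul _
        _ ≤ (d : ℝ) - 1 := cross_term_le h1 h2
    have hSre : -((d:ℝ) - 1) ≤ S.re := by
      have := Complex.abs_re_le_norm S
      have habs' : |S.re| ≤ (d:ℝ) - 1 := le_trans this habs
      have := abs_le.mp habs'
      linarith [this.1]
    have : (((d : ℂ) - 1) + S).re = ((d:ℝ) - 1) + S.re := by
      simp [Complex.add_re, Complex.sub_re]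
    rw [this]
    linarith
  intro ρ hsep
  obtain ⟨K, p, ρ₁, ρ₂, hp, hpsum, hρ1, hρ2, hρeq⟩ := hsep
  have hexp : (ρ * C).trace = ∑ k : Fin K, (p k : ℂ) * ((ρ₁ k ⊗ₖ ρ₂ k) * C).trace := by
    rw [hρeq, Matrix.sum_mul, Matrix.trace_sum]
    refine Finset.sum_congr rfl fun k _ => ?_
    rw [Matrix.smul_mul, Matrix.trace_smul, smul_eq_mul]
  rw [hexp, Complex.re_sum]
  refine Finset.sum_nonneg fun k _ => ?_
  rw [Complex.re_ofReal_mul]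
  exact mul_nonneg (hp k) (key (ρ₁ k) (ρ₂ k) (hρ1 k) (hρ2 k))

end
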